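/- Let p : (0,1) → [1,∞) be nondecreasing with p(1) < ∞, and suppose there is a constant C > 0 such that for all a ∈ (0,1), ∫_a^1 (a^{1/p'(a)} · x^{-1/p'(x)})^{p(x)} dx/x ≤ C, where p'(x) is the Hölder conjugate of p(x) (with 1/p'(x) = 1 - 1/p(x)). Then there exists a constant C₁ > 0, depending only on C and p(1), such that |1/p'(2x) - 1/p'(x)| · ln(1/x) ≤ C₁ for all x ∈ (0, 1/2). -/

import Mathlib

open MeasureTheory Set Real

/-- Lemma 3.1: the modular integral condition implies the log-Hölder type
condition on the conjugate exponent. -/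
theorem stmt_0 (p : ℝ → ℝ) (C : ℝ)
    (hmono : MonotoneOn p (Set.Ioc 0 1))
    (hp1 : ∀ x ∈ Set.Ioc (0:ℝ) 1, 1 ≤ p x)
    (hC : 0 < C)
    (hint : ∀ a ∈ Set.Ioo (0:ℝ) 1,
      ∫ x in Set.Ioc a 1,
        (a ^ (1 - 1 / p a) * x ^ (-(1 - 1 / p x))) ^ p x / x ≤ C) :
    ∃ C₁ > 0, ∀ x ∈ Set.Ioo (0:ℝ) (1/2),
      |(1 - 1 / p (2 * x)) - (1 - 1 / p x)| * Real.log (1 / x) ≤ C₁ := by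
  have hlog4 : (0:ℝ) < Real.log 4 := Real.log_pos (by norm_num)
  refine ⟨max (Real.log (8 * C)) 0 + Real.log 4, by
    have := le_max_right (Real.log (8 * C)) 0
    linarith, ?_⟩
  intro x hx
  obtain ⟨hx0, hx2⟩ := hx
  have hx1 : x ∈ Set.Ioc (0:ℝ) 1 := ⟨hx0, by linarith⟩
  have h2x : 2 * x ∈ Set.Ioc (0:ℝ) 1 := ⟨by linarith, by linarith⟩
  have hpx1 : 1 ≤ p x := hp1 x hx1
  have hp2x1 : 1 ≤ p (2 * x) := hp1 _ h2x
  have hple : p x ≤ p (2 * x) := hmono hx1 h2x (by linarith)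
  have hinv : 1 / p (2 * x) ≤ 1 / p x :=
    one_div_le_one_div_of_le (by linarith) hple
  have hinvx1 : 1 / p x ≤ 1 := by
    rw [div_le_one (by linarith)]; exact hpx1
  have hinv2pos : 0 < 1 / p (2 * x) := by positivity
  have hinvxpos : 0 < 1 / p x := by positivity
  set D : ℝ := (1 - 1 / p (2 * x)) - (1 - 1 / p x) with hDdef
  have hD0 : 0 ≤ D := by simp only [hDdef]; linarith
  have hD1 : D ≤ 1 := by simp only [hDdef]; linarith
  rw [abs_of_nonneg hD0]
  have hkey : D * Real.log (1 / x) = Real.log (x ^ (-D)) := by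
    rw [Real.log_rpow hx0, one_div, Real.log_inv]; ring
  have hlogpos : 0 ≤ Real.log (1 / x) := by
    apply Real.log_nonneg
    rw [le_div_iff₀ hx0]; linarith
  rcases le_or_gt x (1/4) with hx4 | hx4
  · -- main case : x ≤ 1/4
    rcases le_or_gt (x ^ (-D)) 4 with hB | hB
    · -- trivial subcase
      have : Real.log (x ^ (-D)) ≤ Real.log 4 :=
        Real.log_le_log (Real.rpow_pos_of_pos hx0 _) hB
      have hmax := le_max_right (Real.log (8 * C)) 0
      rw [hkey]
      linarith
    · -- hard subcase: use the integral condition with a = x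
      have hBpos : (0:ℝ) < x ^ (-D) := Real.rpow_pos_of_pos hx0 _
      set f : ℝ → ℝ :=
        fun t => (x ^ (1 - 1 / p x) * t ^ (-(1 - 1 / p t))) ^ p t / t with hfdef
      have hint' : ∫ t in Set.Ioc x 1, f t ≤ C := hint x ⟨hx0, by linarith⟩
      -- basic facts about points of Ioc x 1
      have hfact : ∀ t ∈ Set.Ioc x 1, 0 < t ∧ 1 ≤ p t ∧ p t ≤ p 1 := by
        intro t ht
        have ht0 : 0 < t := lt_trans hx0 ht.1
        exact ⟨ht0, hp1 t ⟨ht0, ht.2⟩,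
          hmono ⟨ht0, ht.2⟩ ⟨one_pos, le_refl 1⟩ ht.2⟩
      -- measurability
      have hpm : AEMeasurable p (volume.restrict (Set.Ioc x 1)) :=
        aemeasurable_restrict_of_monotoneOn measurableSet_Ioc
          (hmono.mono (Set.Ioc_subset_Ioc_left hx0.le))
      have hinvm : AEMeasurable (fun t => -(1 - 1 / p t))
          (volume.restrict (Set.Ioc x 1)) :=
        (aemeasurable_const.sub (aemeasurable_const.div hpm)).neg
      have hgm : AEMeasurable
          (fun t => Real.exp (p t *
            Real.log (x ^ (1 - 1 / p x) *
              Real.exp (-(1 - 1 / p t) * Real.log t))) / t)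
          (volume.restrict (Set.Ioc x 1)) := by
        apply AEMeasurable.div _ aemeasurable_id
        apply Real.measurable_exp.comp_aemeasurable
        apply hpm.mul
        apply Real.measurable_log.comp_aemeasurable
        apply aemeasurable_const.mul
        apply Real.measurable_exp.comp_aemeasurable
        exact hinvm.mul Real.measurable_log.aemeasurable
      have hfm : AEMeasurable f (volume.restrict (Set.Ioc x 1)) := by
        apply hgm.congr
        filter_upwards [ae_restrict_mem measurableSet_Ioc] with t ht
        obtain ⟨ht0, hpt1, _⟩ := hfact t ht
        have hbpos : 0 < x ^ (1 - 1 / p x) * t ^ (-(1 - 1 / p t)) :=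
          mul_pos (Real.rpow_pos_of_pos hx0 _) (Real.rpow_pos_of_pos ht0 _)
        rw [hfdef]
        simp only
        rw [Real.rpow_def_of_pos hbpos, Real.rpow_def_of_pos ht0, mul_comm (Real.log t)]
        ring_nf
      -- pointwise upper bound on Ioc x 1
      have hxinv1 : (1:ℝ) ≤ 1 / x := by rw [le_div_iff₀ hx0]; linarith
      have hbound : ∀ t ∈ Set.Ioc x 1, f t ≤ (1/x) ^ p 1 * (1/x) := by
        intro t ht
        obtain ⟨ht0, hpt1, hptp1⟩ := hfact t ht
        have hinvt : 0 < 1 / p t := by positivity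
        have hb1 : x ^ (1 - 1 / p x) ≤ 1 :=
          Real.rpow_le_one hx0.le (by linarith) (by linarith)
        have hb2 : t ^ (-(1 - 1 / p t)) ≤ 1 / x := by
          calc t ^ (-(1 - 1 / p t)) ≤ t ^ (-1 : ℝ) :=
                Real.rpow_le_rpow_of_exponent_ge ht0 ht.2 (by linarith)
            _ = 1 / t := by rw [Real.rpow_neg_one, one_div]
            _ ≤ 1 / x := one_div_le_one_div_of_le hx0 ht.1.le
        have hbase : x ^ (1 - 1 / p x) * t ^ (-(1 - 1 / p t)) ≤ 1 / x := by
          calc x ^ (1 - 1 / p x) * t ^ (-(1 - 1 / p t))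
              ≤ 1 * (1 / x) := by
                apply mul_le_mul hb1 hb2 (Real.rpow_nonneg ht0.le _) zero_le_one
            _ = 1 / x := one_mul _
        have hnum : (x ^ (1 - 1 / p x) * t ^ (-(1 - 1 / p t))) ^ p t
            ≤ (1/x) ^ p 1 := by
          calc (x ^ (1 - 1 / p x) * t ^ (-(1 - 1 / p t))) ^ p t
              ≤ (1/x) ^ p t := Real.rpow_le_rpow
                (mul_nonneg (Real.rpow_nonneg hx0.le _) (Real.rpow_nonneg ht0.le _))
                hbase (by linarith)
            _ ≤ (1/x) ^ p 1 := Real.rpow_le_rpow_of_exponent_le hxinv1 hptp1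
        calc f t ≤ (1/x) ^ p 1 / t := by
              rw [hfdef]
              exact (div_le_div_iff_of_pos_right ht0).mpr hnum
          _ ≤ (1/x) ^ p 1 * (1/x) := by
              rw [div_eq_mul_one_div]
              exact mul_le_mul_of_nonneg_left
                (one_div_le_one_div_of_le hx0 ht.1.le)
                (Real.rpow_nonneg (by positivity) _)
      -- integrability on Ioc x 1
      have hI : IntegrableOn f (Set.Ioc x 1) := by
        apply Integrable.mono' (g := fun _ => (1/x) ^ p 1 * (1/x))
          (integrableOn_const measure_Ioc_lt_top.ne)
          hfm.aestronglyMeasurable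
        filter_upwards [ae_restrict_mem measurableSet_Ioc] with t ht
        obtain ⟨ht0, _, _⟩ := hfact t ht
        rw [Real.norm_eq_abs, abs_of_nonneg]
        · exact hbound t ht
        · rw [hfdef]
          positivity
      -- nonnegativity
      have hnn : 0 ≤ᵐ[volume.restrict (Set.Ioc x 1)] f := by
        filter_upwards [ae_restrict_mem measurableSet_Ioc] with t ht
        have ht0 : 0 < t := lt_trans hx0 ht.1
        rw [hfdef]; positivity
      -- subset
      have hsub : Set.Ioc (2*x) (4*x) ⊆ Set.Ioc x 1 := by
        intro t ht
        exact ⟨by nlinarith [ht.1], by nlinarith [ht.2]⟩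
      have hmono_int : ∫ t in Set.Ioc (2*x) (4*x), f t ≤ ∫ t in Set.Ioc x 1, f t :=
        setIntegral_mono_set hI hnn (HasSubset.Subset.eventuallyLE hsub)
      -- pointwise lower bound on Ioc (2x) (4x)
      have hBq : (1:ℝ) ≤ x ^ (-D) / 4 := by linarith
      have hlb : ∀ t ∈ Set.Ioc (2*x) (4*x), (x ^ (-D) / 4) / (4 * x) ≤ f t := by
        intro t ht
        have htI : t ∈ Set.Ioc x 1 := hsub ht
        obtain ⟨ht0, hpt1, _⟩ := hfact t htI
        have hp2t : p (2*x) ≤ p t := hmono h2x ⟨ht0, htI.2⟩ ht.1.le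
        have hinvt : 1 / p t ≤ 1 / p (2*x) :=
          one_div_le_one_div_of_le (by linarith) hp2t
        have h4x0 : (0:ℝ) < 4 * x := by linarith
        -- lower bound the base
        have hs1 : t ^ (-(1 - 1 / p (2*x))) ≤ t ^ (-(1 - 1 / p t)) :=
          Real.rpow_le_rpow_of_exponent_ge ht0 htI.2 (by linarith)
        have hs2 : (4*x) ^ (-(1 - 1 / p (2*x))) ≤ t ^ (-(1 - 1 / p (2*x))) :=
          Real.rpow_le_rpow_of_nonpos ht0 ht.2 (by linarith)
        have hs3 : (4*x:ℝ) ^ (-(1 - 1 / p (2*x)))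
            = 4 ^ (-(1 - 1 / p (2*x))) * x ^ (-(1 - 1 / p (2*x))) :=
          Real.mul_rpow (by norm_num) hx0.le
        have hs4 : (1:ℝ)/4 ≤ 4 ^ (-(1 - 1 / p (2*x))) := by
          have : (4:ℝ) ^ (-1:ℝ) ≤ 4 ^ (-(1 - 1 / p (2*x))) :=
            Real.rpow_le_rpow_of_exponent_le (by norm_num) (by linarith)
          rwa [Real.rpow_neg_one, show ((4:ℝ)⁻¹ = 1/4) by norm_num] at this
        have hs5 : x ^ (1 - 1/p x) * x ^ (-(1 - 1 / p (2*x))) = x ^ (-D) := by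
          rw [← Real.rpow_add hx0]
          congr 1
          simp only [hDdef]; ring
        have hbase : x ^ (-D) / 4 ≤ x ^ (1 - 1/p x) * t ^ (-(1 - 1 / p t)) := by
          calc x ^ (-D) / 4
              = (1/4) * (x ^ (1 - 1/p x) * x ^ (-(1 - 1 / p (2*x)))) := by
                rw [hs5]; ring
            _ ≤ 4 ^ (-(1 - 1 / p (2*x)))
                  * (x ^ (1 - 1/p x) * x ^ (-(1 - 1 / p (2*x)))) := by
                apply mul_le_mul_of_nonneg_right hs4
                positivity
            _ = x ^ (1 - 1/p x) * (4*x) ^ (-(1 - 1 / p (2*x))) := by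
                rw [hs3]; ring
            _ ≤ x ^ (1 - 1/p x) * t ^ (-(1 - 1 / p (2*x))) :=
                mul_le_mul_of_nonneg_left hs2 (Real.rpow_nonneg hx0.le _)
            _ ≤ x ^ (1 - 1/p x) * t ^ (-(1 - 1 / p t)) :=
                mul_le_mul_of_nonneg_left hs1 (Real.rpow_nonneg hx0.le _)
        have hnum : x ^ (-D) / 4
            ≤ (x ^ (1 - 1/p x) * t ^ (-(1 - 1 / p t))) ^ p t := by
          calc x ^ (-D) / 4 = (x ^ (-D) / 4) ^ (1:ℝ) := (Real.rpow_one _).symm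
            _ ≤ (x ^ (-D) / 4) ^ p t :=
                Real.rpow_le_rpow_of_exponent_le hBq hpt1
            _ ≤ (x ^ (1 - 1/p x) * t ^ (-(1 - 1 / p t))) ^ p t :=
                Real.rpow_le_rpow (by positivity) hbase (by linarith)
        calc (x ^ (-D) / 4) / (4 * x)
            ≤ (x ^ (-D) / 4) / t :=
              div_le_div_of_nonneg_left (by positivity) ht0 ht.2
          _ ≤ (x ^ (1 - 1/p x) * t ^ (-(1 - 1 / p t))) ^ p t / t :=
              (div_le_div_iff_of_pos_right ht0).mpr hnum
      -- apply the constant lower bound for the integral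
      have hvol : (volume (Set.Ioc (2*x) (4*x))).toReal = 2 * x := by
        rw [Real.volume_Ioc, ENNReal.toReal_ofReal (by linarith)]
        ring
      have hge : (x ^ (-D) / 4) / (4 * x) * (volume (Set.Ioc (2*x) (4*x))).toReal
          ≤ ∫ t in Set.Ioc (2*x) (4*x), f t :=
        by have h := setIntegral_ge_of_const_le measurableSet_Ioc measure_Ioc_lt_top.ne hlb
             (hI.mono_set hsub)
           rw [smul_eq_mul, mul_comm] at h; exact h
      rw [hvol] at hge
      have hgoal : x ^ (-D) / 8 ≤ C := by
        have heq : (x ^ (-D) / 4) / (4 * x) * (2 * x) = x ^ (-D) / 8 := by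
          field_simp
          ring
        rw [heq] at hge
        linarith
      have h8C : x ^ (-D) ≤ 8 * C := by linarith
      have : Real.log (x ^ (-D)) ≤ Real.log (8 * C) :=
        Real.log_le_log hBpos h8C
      have := le_max_left (Real.log (8 * C)) 0
      linarith [hkey]
  · -- easy case : 1/4 < x < 1/2
    have hlogx : Real.log (1/x) ≤ Real.log 4 := by
      apply Real.log_le_log (by positivity)
      rw [div_le_iff₀ hx0]; linarith
    have h1 : D * Real.log (1/x) ≤ 1 * Real.log 4 :=
      mul_le_mul hD1 hlogx hlogpos zero_le_one
    have := le_max_right (Real.log (8 * C)) 0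
    linarith
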